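/- As α → 0⁺, the Rényi divergence D_α(P1‖P2) converges to −log P2(S(P1)), where P2(S(P1)) = ∑_{x : P1(x)>0} P2(x). -/

import Mathlib

open scoped Classical BigOperators

noncomputable def shannonEntropy {X : Type*} [Fintype X] (Q : X → ℝ) : ℝ :=
  -∑ x, Q x * Real.log (Q x)

noncomputable def klDiv {X : Type*} [Fintype X] (Q P : X → ℝ) : EReal :=
  if ∀ x, 0 < Q x → 0 < P x then
    ((∑ x, Q x * Real.log (Q x / P x) : ℝ) : EReal)
  else ⊤

noncomputable def renyiEntropy {X : Type*} [Fintype X] (α : ℝ) (P : X → ℝ) : ℝ :=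
  (1 / (1 - α)) * Real.log (∑ x, P x ^ α)

noncomputable def renyiDiv {X : Type*} [Fintype X] (α : ℝ) (P1 P2 : X → ℝ) : EReal :=
  if 1 < α ∧ ¬ (∀ x, 0 < P1 x → 0 < P2 x) then ⊤
  else if ∀ x, ¬ (0 < P1 x ∧ 0 < P2 x) then ⊤
  else ((1 / (α - 1)) *
      Real.log (∑ x, if 0 < P1 x ∧ 0 < P2 x then P1 x ^ α * P2 x ^ (1 - α) else 0) : ℝ)

def IsPMF {X : Type*} [Fintype X] (P : X → ℝ) : Prop :=
  (∀ x, 0 ≤ P x) ∧ ∑ x, P x = 1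

theorem renyi_div_tendsto_zero {X : Type*} [Fintype X] (P1 P2 : X → ℝ)
    (hP1 : IsPMF P1) (hP2 : IsPMF P2) :
    Filter.Tendsto (fun α => renyiDiv α P1 P2) (nhdsWithin 0 (Set.Ioi 0))
      (nhds (if (∑ x, if 0 < P1 x then P2 x else 0) = 0 then (⊤ : EReal)
             else ((-Real.log (∑ x, if 0 < P1 x then P2 x else 0) : ℝ) : EReal))) := by

  obtain ⟨hP1nn, hP1sum⟩ := hP1
  obtain ⟨hP2nn, hP2sum⟩ := hP2
  by_cases hS : (∑ x, if 0 < P1 x then P2 x else 0) = 0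
  · have hall : ∀ x, ¬ (0 < P1 x ∧ 0 < P2 x) := by
      intro x hx
      have h := (Finset.sum_eq_zero_iff_of_nonneg (by
        intro y _
        by_cases h1 : 0 < P1 y <;> simp [h1, hP2nn y])).mp hS x (Finset.mem_univ x)
      rw [if_pos hx.1] at h
      exact hx.2.ne' h
    have heq : (fun α => renyiDiv α P1 P2) = fun _ => (⊤ : EReal) := by
      funext α
      simp [renyiDiv, hall]
    rw [heq, if_pos hS]
    exact tendsto_const_nhds
  · rw [if_neg hS]
    have hSnn : 0 ≤ ∑ x, if 0 < P1 x then P2 x else 0 := by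
      apply Finset.sum_nonneg
      intro x _
      by_cases h1 : 0 < P1 x <;> simp [h1, hP2nn x]
    have hSpos : 0 < ∑ x, if 0 < P1 x then P2 x else 0 := lt_of_le_of_ne hSnn (Ne.symm hS)
    have hS' : (∑ x, (if 0 < P1 x ∧ 0 < P2 x then P2 x else 0))
        = ∑ x, if 0 < P1 x then P2 x else 0 := by
      apply Finset.sum_congr rfl
      intro x _
      by_cases h1 : 0 < P1 x <;> by_cases h2 : 0 < P2 x <;> simp [h1, h2]
      exact (le_antisymm (not_lt.mp h2) (hP2nn x)).symm
    have hex : ∃ x, 0 < P1 x ∧ 0 < P2 x := by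
      by_contra hc
      push_neg at hc
      apply hS
      rw [← hS']
      apply Finset.sum_eq_zero
      intro x _
      simp only [if_neg (fun h : 0 < P1 x ∧ 0 < P2 x => (hc x h.1).not_gt h.2)]
    have hrc : ∀ b : ℝ, 0 < b → Continuous (fun a : ℝ => b ^ a) := by
      intro b hb
      have h : (fun a : ℝ => b ^ a) = fun a => Real.exp (Real.log b * a) := by
        funext a; rw [Real.rpow_def_of_pos hb]
      rw [h]
      exact Real.continuous_exp.comp (continuous_const.mul continuous_id)
    set g : ℝ → ℝ := fun α =>
      ∑ x, if 0 < P1 x ∧ 0 < P2 x then P1 x ^ α * P2 x ^ (1 - α) else 0 with hgdef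
    have hgc : Continuous g := by
      apply continuous_finset_sum
      intro x _
      by_cases hx : 0 < P1 x ∧ 0 < P2 x
      · simp only [if_pos hx]
        exact (hrc _ hx.1).mul ((hrc _ hx.2).comp (continuous_const.sub continuous_id))
      · simp only [if_neg hx]
        exact continuous_const
    have hg0 : g 0 = ∑ x, if 0 < P1 x then P2 x else 0 := by
      rw [hgdef, ← hS']
      apply Finset.sum_congr rfl
      intro x _
      by_cases hx : 0 < P1 x ∧ 0 < P2 x <;> simp [hx, Real.rpow_zero, Real.rpow_one]
    have hmain : Filter.Tendsto (fun α : ℝ => (1 / (α - 1)) * Real.log (g α)) (nhds 0)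
        (nhds (-Real.log (∑ x, if 0 < P1 x then P2 x else 0))) := by
      have h1c : ContinuousAt (fun α : ℝ => 1 / (α - 1)) 0 :=
        ContinuousAt.div continuousAt_const (continuousAt_id.sub continuousAt_const)
          (by norm_num)
      have hlogc : ContinuousAt (fun α : ℝ => Real.log (g α)) 0 :=
        (Real.continuousAt_log (by rw [hg0]; exact hSpos.ne')).comp hgc.continuousAt
      have := (h1c.mul hlogc).tendsto
      simp only [Pi.mul_apply, hg0] at this
      convert this using 2
      all_goals norm_num
    have hmain' : Filter.Tendsto
        (fun α : ℝ => (((1 / (α - 1)) * Real.log (g α) : ℝ) : EReal))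
        (nhdsWithin 0 (Set.Ioi 0))
        (nhds ((-Real.log (∑ x, if 0 < P1 x then P2 x else 0) : ℝ) : EReal)) :=
      (continuous_coe_real_ereal.tendsto _).comp (hmain.mono_left nhdsWithin_le_nhds)
    apply hmain'.congr'
    have hIoo : Set.Ioo (0:ℝ) 1 ∈ nhdsWithin 0 (Set.Ioi 0) :=
      Ioo_mem_nhdsGT_of_mem ⟨le_refl 0, one_pos⟩
    filter_upwards [hIoo] with α hα
    rw [renyiDiv, if_neg (fun h => absurd h.1 (by linarith [hα.2])),
      if_neg (by push_neg; exact hex)]
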